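/- The C-algebra Λ := C⟨x,y⟩/(xy+yx, x³-y²) is nine-dimensional as a C-vector space, with basis {1, y, x, y², yx, x², y²x, yx², y²x²}. -/

import Mathlib

open FreeAlgebra

/-- The relations defining Λ = C⟨x,y⟩/(xy+yx, x³-y²), with x = ι ℂ 0 and y = ι ℂ 1. -/
inductive LamRel : FreeAlgebra ℂ (Fin 2) → FreeAlgebra ℂ (Fin 2) → Prop
  | r1 : LamRel (ι ℂ 0 * ι ℂ 1 + ι ℂ 1 * ι ℂ 0) 0
  | r2 : LamRel ((ι ℂ 0) ^ 3 - (ι ℂ 1) ^ 2) 0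

noncomputable abbrev Lam := RingQuot LamRel

noncomputable abbrev lx : Lam := RingQuot.mkAlgHom ℂ LamRel (ι ℂ 0)
noncomputable abbrev ly : Lam := RingQuot.mkAlgHom ℂ LamRel (ι ℂ 1)

open Matrix

/-- Elementary matrix helper. -/
noncomputable def LamE (i j : Fin 9) (c : ℂ) : Matrix (Fin 9) (Fin 9) ℂ := Matrix.single i j c

lemma LamEneg (i j : Fin 9) : Matrix.single i j (-1 : ℂ) = -Matrix.single i j 1 := by
  ext a b; simp [Matrix.single]; split <;> simp

/-- The matrix of left multiplication by x in the regular representation of Λ,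
basis order 1, y, x, y², yx, x², y²x, yx², y²x². -/
noncomputable def LamX : Matrix (Fin 9) (Fin 9) ℂ :=
  LamE 2 0 1 + LamE 5 2 1 + LamE 6 3 1 + LamE 3 5 1 + LamE 8 6 1 + LamE 4 1 (-1) + LamE 7 4 (-1)

/-- The matrix of left multiplication by y. -/
noncomputable def LamY : Matrix (Fin 9) (Fin 9) ℂ :=
  LamE 1 0 1 + LamE 3 1 1 + LamE 4 2 1 + LamE 6 4 1 + LamE 7 5 1 + LamE 8 7 1

set_option maxHeartbeats 1000000 in
lemma LamRelA : LamX * LamY + LamY * LamX = 0 := by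
  simp (config := { decide := true }) only [LamX, LamY, LamE, add_mul, mul_add,
    Matrix.single_mul_single_same, Matrix.single_mul_single_of_ne, one_mul, mul_one, ne_eq,
    zero_add, add_zero, neg_mul, mul_neg, neg_neg, Matrix.single_zero, LamEneg,
    mul_zero, zero_mul, neg_zero]
  abel

set_option maxHeartbeats 1000000 in
lemma LamRelB : LamX ^ 3 = LamY ^ 2 := by
  rw [pow_succ, pow_two, pow_two]
  simp (config := { decide := true }) only [LamX, LamY, LamE, add_mul, mul_add,
    Matrix.single_mul_single_same, Matrix.single_mul_single_of_ne, one_mul, mul_one, ne_eq,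
    zero_add, add_zero, neg_mul, mul_neg, neg_neg, Matrix.single_zero, LamEneg,
    mul_zero, zero_mul, neg_zero]

/-- The free lift sending x, y to the matrices above. -/
noncomputable def Lamφ0 : FreeAlgebra ℂ (Fin 2) →ₐ[ℂ] Matrix (Fin 9) (Fin 9) ℂ :=
  FreeAlgebra.lift ℂ ![LamX, LamY]

lemma Lamφ0_rel : ∀ ⦃a b⦄, LamRel a b → Lamφ0 a = Lamφ0 b := by
  intro a b h
  cases h with
  | r1 =>
    simp only [Lamφ0, _root_.map_add, _root_.map_mul, _root_.map_zero, FreeAlgebra.lift_ι_apply,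
      Matrix.cons_val_zero, Matrix.cons_val_one, Matrix.head_cons]
    exact LamRelA
  | r2 =>
    simp only [Lamφ0, _root_.map_sub, _root_.map_pow, _root_.map_zero, FreeAlgebra.lift_ι_apply,
      Matrix.cons_val_zero, Matrix.cons_val_one, Matrix.head_cons, sub_eq_zero]
    exact LamRelB

/-- The induced representation of Λ. -/
noncomputable def Lamφ : Lam →ₐ[ℂ] Matrix (Fin 9) (Fin 9) ℂ :=
  RingQuot.liftAlgHom ℂ ⟨Lamφ0, Lamφ0_rel⟩

lemma Lamφ_x : Lamφ lx = LamX := by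
  simp [Lamφ, RingQuot.liftAlgHom_mkAlgHom_apply, Lamφ0]

lemma Lamφ_y : Lamφ ly = LamY := by
  simp [Lamφ, RingQuot.liftAlgHom_mkAlgHom_apply, Lamφ0]

/-- Extraction of the 0-th column. -/
noncomputable def Lamcol : Matrix (Fin 9) (Fin 9) ℂ →ₗ[ℂ] (Fin 9 → ℂ) where
  toFun M := fun i => M i 0
  map_add' _ _ := rfl
  map_smul' _ _ := rfl

noncomputable def Lamψ : Lam →ₗ[ℂ] (Fin 9 → ℂ) := Lamcol ∘ₗ Lamφ.toLinearMap

noncomputable def Lamv : Fin 9 → Lam :=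
  ![1, ly, lx, ly ^ 2, ly * lx, lx ^ 2, ly ^ 2 * lx, ly * lx ^ 2, ly ^ 2 * lx ^ 2]

lemma Lamv_0 : Lamv 0 = 1 := rfl
lemma Lamv_1 : Lamv 1 = ly := rfl
lemma Lamv_2 : Lamv 2 = lx := rfl
lemma Lamv_3 : Lamv 3 = ly ^ 2 := rfl
lemma Lamv_4 : Lamv 4 = ly * lx := rfl
lemma Lamv_5 : Lamv 5 = lx ^ 2 := rfl
lemma Lamv_6 : Lamv 6 = ly ^ 2 * lx := rfl
lemma Lamv_7 : Lamv 7 = ly * lx ^ 2 := rfl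
lemma Lamv_8 : Lamv 8 = ly ^ 2 * lx ^ 2 := rfl

set_option maxHeartbeats 1000000 in
lemma Lamψ_v (k : Fin 9) : Lamψ (Lamv k) = Pi.single k 1 := by
  have tac : ∀ (m : Lam) (M : Matrix (Fin 9) (Fin 9) ℂ), Lamφ m = M →
      Lamψ m = (fun i => M i 0) := by
    intro m M hm
    simp only [Lamψ, LinearMap.comp_apply, AlgHom.toLinearMap_apply, hm, Lamcol,
      LinearMap.coe_mk, AddHom.coe_mk]
    rfl
  have e0 : Lamψ (Lamv 0) = Pi.single 0 1 := by
    rw [Lamv_0, tac 1 1 (map_one Lamφ)]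
    funext i; fin_cases i <;>
      simp (config := { decide := true }) [Matrix.one_apply, Pi.single, Function.update]
  have e1 : Lamψ (Lamv 1) = Pi.single 1 1 := by
    rw [Lamv_1, tac ly LamY Lamφ_y]
    funext i; fin_cases i <;>
      simp (config := { decide := true }) [LamY, LamE, Matrix.single, Pi.single, Function.update]
  have e2 : Lamψ (Lamv 2) = Pi.single 2 1 := by
    rw [Lamv_2, tac lx LamX Lamφ_x]
    funext i; fin_cases i <;>
      simp (config := { decide := true }) [LamX, LamE, Matrix.single, Pi.single, Function.update]
  have e3 : Lamψ (Lamv 3) = Pi.single 3 1 := by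
    rw [Lamv_3, tac (ly ^ 2) (LamY * LamY) (by rw [_root_.map_pow, Lamφ_y, pow_two])]
    funext i; fin_cases i <;>
      simp (config := { decide := true }) [LamY, LamE, Matrix.single, Pi.single,
        Function.update, Matrix.mul_apply, Fin.sum_univ_succ]
  have e4 : Lamψ (Lamv 4) = Pi.single 4 1 := by
    rw [Lamv_4, tac (ly * lx) (LamY * LamX) (by rw [_root_.map_mul, Lamφ_y, Lamφ_x])]
    funext i; fin_cases i <;>
      simp (config := { decide := true }) [LamY, LamX, LamE, Matrix.single, Pi.single,
        Function.update, Matrix.mul_apply, Fin.sum_univ_succ]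
  have e5 : Lamψ (Lamv 5) = Pi.single 5 1 := by
    rw [Lamv_5, tac (lx ^ 2) (LamX * LamX) (by rw [_root_.map_pow, Lamφ_x, pow_two])]
    funext i; fin_cases i <;>
      simp (config := { decide := true }) [LamX, LamE, Matrix.single, Pi.single,
        Function.update, Matrix.mul_apply, Fin.sum_univ_succ]
  have e6 : Lamψ (Lamv 6) = Pi.single 6 1 := by
    rw [Lamv_6, tac (ly ^ 2 * lx) (LamY * LamY * LamX)
      (by rw [_root_.map_mul, _root_.map_pow, Lamφ_y, Lamφ_x, pow_two])]
    funext i; fin_cases i <;>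
      simp (config := { decide := true }) [LamY, LamX, LamE, Matrix.single, Pi.single,
        Function.update, Matrix.mul_apply, Fin.sum_univ_succ]
  have e7 : Lamψ (Lamv 7) = Pi.single 7 1 := by
    rw [Lamv_7, tac (ly * lx ^ 2) (LamY * (LamX * LamX))
      (by rw [_root_.map_mul, _root_.map_pow, Lamφ_y, Lamφ_x, pow_two])]
    funext i; fin_cases i <;>
      simp (config := { decide := true }) [LamY, LamX, LamE, Matrix.single, Pi.single,
        Function.update, Matrix.mul_apply, Fin.sum_univ_succ]
  have e8 : Lamψ (Lamv 8) = Pi.single 8 1 := by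
    rw [Lamv_8, tac (ly ^ 2 * lx ^ 2) (LamY * LamY * (LamX * LamX))
      (by rw [_root_.map_mul, _root_.map_pow, _root_.map_pow, Lamφ_y, Lamφ_x, pow_two, pow_two])]
    funext i; fin_cases i <;>
      simp (config := { decide := true }) [LamY, LamX, LamE, Matrix.single, Pi.single,
        Function.update, Matrix.mul_apply, Fin.sum_univ_succ]
  fin_cases k
  · exact e0
  · exact e1
  · exact e2
  · exact e3
  · exact e4
  · exact e5
  · exact e6
  · exact e7
  · exact e8

lemma Lam_li : LinearIndependent ℂ Lamv := by
  apply LinearIndependent.of_comp Lamψ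
  have h : Lamψ ∘ Lamv = ⇑(Pi.basisFun ℂ (Fin 9)) := by
    funext k
    rw [Function.comp_apply, Lamψ_v, Pi.basisFun_apply]
  rw [h]
  exact (Pi.basisFun ℂ (Fin 9)).linearIndependent

-- Helpers to work around the `RingQuot.instNeg` instance mismatch
lemma Lneg_mul (a b : Lam) : -a * b = -(a * b) := neg_mul a b
lemma Lmul_neg (a b : Lam) : a * -b = -(a * b) := mul_neg a b
lemma Lneg_neg (a : Lam) : -(-a) = a := neg_neg a
lemma Lneg_zero : -(0 : Lam) = 0 := neg_zero

-- Identities in Lam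
lemma Lam_hxy : lx * ly = -(ly * lx) := by
  have h := RingQuot.mkAlgHom_rel ℂ LamRel.r1
  simp only [_root_.map_add, _root_.map_mul, _root_.map_zero] at h
  exact eq_neg_of_add_eq_zero_left h

lemma Lam_hx3 : lx ^ 3 = ly ^ 2 := by
  have h := RingQuot.mkAlgHom_rel ℂ LamRel.r2
  simp only [_root_.map_sub, _root_.map_pow, _root_.map_zero, sub_eq_zero] at h
  exact h

lemma Lam_comm2 : lx * ly ^ 2 = ly ^ 2 * lx := by
  calc lx * ly ^ 2 = (lx * ly) * ly := by rw [pow_two, mul_assoc]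
    _ = (-(ly * lx)) * ly := by rw [Lam_hxy]
    _ = -((ly * lx) * ly) := by rw [Lneg_mul]
    _ = -(ly * (lx * ly)) := by rw [mul_assoc]
    _ = -(ly * (-(ly * lx))) := by rw [Lam_hxy]
    _ = ly * (ly * lx) := by rw [Lmul_neg, Lneg_neg]
    _ = (ly * ly) * lx := by rw [mul_assoc]
    _ = ly ^ 2 * lx := by rw [pow_two]

lemma Lam_comm2x : lx ^ 2 * ly = ly * lx ^ 2 := by
  calc lx ^ 2 * ly = (lx * lx) * ly := by rw [pow_two]
    _ = lx * (lx * ly) := by rw [mul_assoc]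
    _ = lx * (-(ly * lx)) := by rw [Lam_hxy]
    _ = -(lx * (ly * lx)) := by rw [Lmul_neg]
    _ = -((lx * ly) * lx) := by rw [← mul_assoc]
    _ = -((-(ly * lx)) * lx) := by rw [Lam_hxy]
    _ = (ly * lx) * lx := by rw [Lneg_mul, Lneg_neg]
    _ = ly * (lx * lx) := by rw [mul_assoc]
    _ = ly * lx ^ 2 := by rw [pow_two]

lemma Lam_c3 : lx ^ 3 * ly = -(ly * lx ^ 3) := by
  calc lx ^ 3 * ly = (lx * lx ^ 2) * ly := by rw [pow_succ']
    _ = lx * (lx ^ 2 * ly) := by rw [mul_assoc]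
    _ = lx * (ly * lx ^ 2) := by rw [Lam_comm2x]
    _ = (lx * ly) * lx ^ 2 := by rw [← mul_assoc]
    _ = (-(ly * lx)) * lx ^ 2 := by rw [Lam_hxy]
    _ = -((ly * lx) * lx ^ 2) := by rw [Lneg_mul]
    _ = -(ly * (lx * lx ^ 2)) := by rw [mul_assoc]
    _ = -(ly * lx ^ 3) := by rw [← pow_succ']

lemma Lam_hy3 : ly ^ 3 = 0 := by
  have h : ly ^ 3 = -(ly ^ 3) := by
    calc ly ^ 3 = ly ^ 2 * ly := by rw [pow_succ]
      _ = lx ^ 3 * ly := by rw [Lam_hx3]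
      _ = -(ly * lx ^ 3) := Lam_c3
      _ = -(ly * ly ^ 2) := by rw [Lam_hx3]
      _ = -(ly ^ 3) := by rw [← pow_succ']
  have h2 : (2 : ℂ) • ly ^ 3 = 0 := by
    rw [two_smul]
    nth_rewrite 2 [h]
    exact add_neg_cancel (ly ^ 3)
  calc ly ^ 3 = (2 : ℂ)⁻¹ • ((2 : ℂ) • ly ^ 3) := by rw [smul_smul]; norm_num
    _ = 0 := by rw [h2, smul_zero]

noncomputable def LamP : Submodule ℂ Lam := Submodule.span ℂ (Set.range Lamv)

lemma Lam_mem_v (k : Fin 9) : Lamv k ∈ LamP := Submodule.subset_span ⟨k, rfl⟩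

lemma hP0 : (1 : Lam) ∈ LamP := Lamv_0 ▸ Lam_mem_v 0
lemma hPy : ly ∈ LamP := Lamv_1 ▸ Lam_mem_v 1
lemma hPx : lx ∈ LamP := Lamv_2 ▸ Lam_mem_v 2
lemma hPy2 : ly ^ 2 ∈ LamP := Lamv_3 ▸ Lam_mem_v 3
lemma hPyx : ly * lx ∈ LamP := Lamv_4 ▸ Lam_mem_v 4
lemma hPx2 : lx ^ 2 ∈ LamP := Lamv_5 ▸ Lam_mem_v 5
lemma hPy2x : ly ^ 2 * lx ∈ LamP := Lamv_6 ▸ Lam_mem_v 6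
lemma hPyx2 : ly * lx ^ 2 ∈ LamP := Lamv_7 ▸ Lam_mem_v 7
lemma hPy2x2 : ly ^ 2 * lx ^ 2 ∈ LamP := Lamv_8 ▸ Lam_mem_v 8

lemma Lam_y_mul : ∀ p ∈ LamP, ly * p ∈ LamP := by
  intro p hp
  induction hp using Submodule.span_induction with
  | mem q hq =>
    obtain ⟨k, rfl⟩ := hq
    fin_cases k
    · show ly * 1 ∈ LamP
      rw [mul_one]; exact hPy
    · show ly * ly ∈ LamP
      rw [← pow_two]; exact hPy2
    · show ly * lx ∈ LamP
      exact hPyx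
    · show ly * ly ^ 2 ∈ LamP
      rw [← pow_succ', Lam_hy3]; exact zero_mem _
    · show ly * (ly * lx) ∈ LamP
      rw [← mul_assoc, ← pow_two]; exact hPy2x
    · show ly * lx ^ 2 ∈ LamP
      exact hPyx2
    · show ly * (ly ^ 2 * lx) ∈ LamP
      rw [← mul_assoc, ← pow_succ', Lam_hy3, zero_mul]; exact zero_mem _
    · show ly * (ly * lx ^ 2) ∈ LamP
      rw [← mul_assoc, ← pow_two]; exact hPy2x2
    · show ly * (ly ^ 2 * lx ^ 2) ∈ LamP
      rw [← mul_assoc, ← pow_succ', Lam_hy3, zero_mul]; exact zero_mem _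
  | zero => rw [mul_zero]; exact zero_mem _
  | add x y hx hy ihx ihy => rw [mul_add]; exact add_mem ihx ihy
  | smul a x hx ih => rw [mul_smul_comm]; exact Submodule.smul_mem _ _ ih

lemma Lam_x_mul : ∀ p ∈ LamP, lx * p ∈ LamP := by
  intro p hp
  induction hp using Submodule.span_induction with
  | mem q hq =>
    obtain ⟨k, rfl⟩ := hq
    fin_cases k
    · show lx * 1 ∈ LamP
      rw [mul_one]; exact hPx
    · show lx * ly ∈ LamP
      rw [Lam_hxy]; exact neg_mem hPyx
    · show lx * lx ∈ LamP
      rw [← pow_two]; exact hPx2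
    · show lx * ly ^ 2 ∈ LamP
      rw [Lam_comm2]; exact hPy2x
    · show lx * (ly * lx) ∈ LamP
      rw [← mul_assoc, Lam_hxy, Lneg_mul, mul_assoc, ← pow_two]
      exact neg_mem hPyx2
    · show lx * lx ^ 2 ∈ LamP
      rw [← pow_succ', Lam_hx3]; exact hPy2
    · show lx * (ly ^ 2 * lx) ∈ LamP
      rw [← mul_assoc, Lam_comm2, mul_assoc, ← pow_two]; exact hPy2x2
    · show lx * (ly * lx ^ 2) ∈ LamP
      rw [← mul_assoc, Lam_hxy, Lneg_mul, mul_assoc, ← pow_succ', Lam_hx3, ← pow_succ',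
        Lam_hy3, Lneg_zero]
      exact zero_mem _
    · show lx * (ly ^ 2 * lx ^ 2) ∈ LamP
      rw [← mul_assoc, Lam_comm2, mul_assoc, ← pow_succ', Lam_hx3, ← pow_add]
      rw [show (2 + 2 : ℕ) = 3 + 1 from rfl, pow_succ, Lam_hy3, zero_mul]
      exact zero_mem _
  | zero => rw [mul_zero]; exact zero_mem _
  | add x y hx hy ihx ihy => rw [mul_add]; exact add_mem ihx ihy
  | smul a x hx ih => rw [mul_smul_comm]; exact Submodule.smul_mem _ _ ih

lemma Lam_top_le : (⊤ : Submodule ℂ Lam) ≤ Submodule.span ℂ (Set.range Lamv) := by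
  have key : ∀ z : FreeAlgebra ℂ (Fin 2), ∀ p ∈ LamP,
      (RingQuot.mkAlgHom ℂ LamRel z) * p ∈ LamP := by
    intro z
    induction z using FreeAlgebra.induction with
    | grade0 r =>
      intro p hp
      rw [AlgHom.commutes, ← Algebra.smul_def]
      exact Submodule.smul_mem _ _ hp
    | grade1 i =>
      fin_cases i
      · exact Lam_x_mul
      · exact Lam_y_mul
    | mul a b ha hb =>
      intro p hp
      rw [_root_.map_mul, mul_assoc]
      exact ha _ (hb _ hp)
    | add a b ha hb =>
      intro p hp
      rw [_root_.map_add, add_mul]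
      exact add_mem (ha _ hp) (hb _ hp)
  intro a _
  obtain ⟨z, rfl⟩ := RingQuot.mkAlgHom_surjective ℂ LamRel a
  have := key z 1 hP0
  rw [mul_one] at this
  exact this

theorem stmt3 :
    Module.finrank ℂ Lam = 9 ∧
    ∃ b : Module.Basis (Fin 9) ℂ Lam,
      ⇑b = ![1, ly, lx, ly ^ 2, ly * lx, lx ^ 2, ly ^ 2 * lx, ly * lx ^ 2,
            ly ^ 2 * lx ^ 2] := by
  let b : Module.Basis (Fin 9) ℂ Lam := Module.Basis.mk Lam_li Lam_top_le
  constructor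
  · have := Module.finrank_eq_card_basis b
    simpa using this
  · exact ⟨b, Module.Basis.coe_mk _ _⟩
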